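/- There exists a constant N* ∈ (0,1) with the following property. Let φ : ℝ² → ℝ be twice continuously differentiable and satisfy φ(0,0) = 0, ∇φ(0,0) = 0, and sup over |y'| ≤ 2 of (|φ(y')| + |∇φ(y')| + ‖D²φ(y')‖) ≤ N*. Then for every r ∈ (0, 1/4], the set O(φ,r) := ((−1,1)³ \ E(r)) ∩ { x ∈ ℝ³ : x₃ > φ(x₁,x₂) } is star-shaped with respect to the ball B((0,0,3/4), 1/16); that is, every point a of the open Euclidean ball B((0,0,3/4), 1/16) belongs to O(φ,r), and for every a ∈ B((0,0,3/4), 1/16) and every b ∈ O(φ,r) the closed line segment joining a to b is contained in O(φ,r). -/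

import Mathlib

open Set Metric

noncomputable section

/-- Points of `ℝ³` with the Euclidean norm. -/
abbrev E3 := EuclideanSpace ℝ (Fin 3)

/-- Points of `ℝ²` with the Euclidean norm. -/
abbrev E2 := EuclideanSpace ℝ (Fin 2)

/-- Projection onto the first two coordinates, `x ↦ x' = (x₁, x₂)`. -/
def proj2 (x : E3) : E2 := WithLp.toLp 2 (fun i : Fin 2 => x i.castSucc : Fin 2 → ℝ)

/-- The open cone `E(r) = { x : |x₃ − r|² > |x'|² and x₃ < r }` of angle `π/2`
with vertex `r e₃` pointing in the `e₃` direction. -/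
def coneE (r : ℝ) : Set E3 :=
  {x | (x 2 - r) ^ 2 > (x 0) ^ 2 + (x 1) ^ 2 ∧ x 2 < r}

/-- The open cube `(−1,1)³`. -/
def unitCube : Set E3 := {x | |x 0| < 1 ∧ |x 1| < 1 ∧ |x 2| < 1}

/-- The truncation domain `O(φ,r) = ((−1,1)³ \ E(r)) ∩ { x₃ > φ(x') }`. -/
def Odom (φ : E2 → ℝ) (r : ℝ) : Set E3 :=
  (unitCube \ coneE r) ∩ {x | x 2 > φ (proj2 x)}

/-- The point `(0,0,3/4) ∈ ℝ³`. -/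
def starCenter : E3 := EuclideanSpace.single 2 (3 / 4 : ℝ)

lemma proj2_apply0 (x : E3) : proj2 x 0 = x 0 := rfl

lemma proj2_apply1 (x : E3) : proj2 x 1 = x 1 := rfl

lemma norm_proj2_sq (x : E3) : ‖proj2 x‖ ^ 2 = (x 0) ^ 2 + (x 1) ^ 2 := by
  rw [EuclideanSpace.norm_eq, Real.sq_sqrt (by positivity)]
  simp [Fin.sum_univ_two, proj2_apply0, proj2_apply1, sq_abs]

lemma proj2_comb (u v : ℝ) (a b : E3) :
    proj2 (u • a + v • b) = u • proj2 a + v • proj2 b := by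
  ext i
  simp [proj2]

lemma comb_apply (u v : ℝ) (a b : E3) (i : Fin 3) :
    (u • a + v • b) i = u * a i + v * b i := rfl

lemma mem_coneE_iff (r : ℝ) (x : E3) : x ∈ coneE r ↔ ‖proj2 x‖ < r - x 2 := by
  have h := norm_proj2_sq x
  have hn : 0 ≤ ‖proj2 x‖ := norm_nonneg _
  constructor
  · rintro ⟨h1, h2⟩
    nlinarith
  · intro h1
    exact ⟨by nlinarith, by nlinarith⟩

lemma ball_facts {a : E3} (ha : a ∈ ball starCenter (1 / 16)) :
    ‖proj2 a‖ < 1 / 16 ∧ 11 / 16 < a 2 ∧ a 2 < 13 / 16 := by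
  rw [mem_ball, EuclideanSpace.dist_eq] at ha
  simp only [Fin.sum_univ_three, starCenter, EuclideanSpace.single_apply, Real.dist_eq,
    show ((0 : Fin 3) = 2) ↔ False by simp [Fin.ext_iff],
    show ((1 : Fin 3) = 2) ↔ False by simp [Fin.ext_iff],
    if_false, iff_false] at ha
  have hS := (Real.sqrt_lt' (by norm_num : (0 : ℝ) < 1 / 16)).mp ha
  simp only [sub_zero, sq_abs, if_true, reduceIte] at hS
  have h := norm_proj2_sq a
  have hn : 0 ≤ ‖proj2 a‖ := norm_nonneg _
  refine ⟨by nlinarith, by nlinarith, by nlinarith⟩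

lemma comb_abs_lt {u v p q : ℝ} (hu : 0 ≤ u) (hv : 0 ≤ v) (huv : u + v = 1)
    (hp : |p| < 1) (hq : |q| < 1) : |u * p + v * q| < 1 := by
  have hM1 : max |p| |q| < 1 := max_lt hp hq
  have h1 : |u * p + v * q| ≤ u * |p| + v * |q| := by
    calc |u * p + v * q| ≤ |u * p| + |v * q| := abs_add_le _ _
      _ = u * |p| + v * |q| := by rw [abs_mul, abs_mul, abs_of_nonneg hu, abs_of_nonneg hv]
  have h2 : u * |p| ≤ u * max |p| |q| := mul_le_mul_of_nonneg_left (le_max_left _ _) hu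
  have h3 : v * |q| ≤ v * max |p| |q| := mul_le_mul_of_nonneg_left (le_max_right _ _) hv
  have h4 : u * max |p| |q| + v * max |p| |q| = max |p| |q| := by
    rw [← add_mul, huv, one_mul]
  linarith

set_option maxHeartbeats 2000000 in
/-- **Lemma 2.3 (A star-shaped domain).**  There exists `0 < N* < 1` such that whenever
`φ : ℝ² → ℝ` is `C²` with `φ(0) = 0`, `∇φ(0) = 0` and
`|φ| + |∇φ| + ‖D²φ‖ ≤ N*` on `{|y'| ≤ 2}`, then for every `0 < r ≤ 1/4` the domain
`O(φ,r)` is star-shaped with respect to the ball `B((0,0,3/4), 1/16)`. -/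
theorem star_shaped_domain :
    ∃ Nstar : ℝ, 0 < Nstar ∧ Nstar < 1 ∧
      ∀ φ : E2 → ℝ, ContDiff ℝ 2 φ → φ 0 = 0 → fderiv ℝ φ 0 = 0 →
        (∀ y' : E2, ‖y'‖ ≤ 2 →
          |φ y'| + ‖fderiv ℝ φ y'‖ + ‖iteratedFDeriv ℝ 2 φ y'‖ ≤ Nstar) →
        ∀ r : ℝ, 0 < r → r ≤ 1 / 4 →
          ball starCenter (1 / 16) ⊆ Odom φ r ∧
          ∀ a ∈ ball starCenter (1 / 16), ∀ b ∈ Odom φ r,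
            segment ℝ a b ⊆ Odom φ r := by
  refine ⟨1 / 16, by norm_num, by norm_num, ?_⟩
  intro φ hφ _ _ hbound r hr hr4
  have hφle : ∀ y : E2, ‖y‖ ≤ 2 → |φ y| ≤ 1 / 16 := by
    intro y hy
    have h := hbound y hy
    have h1 : (0 : ℝ) ≤ ‖fderiv ℝ φ y‖ := norm_nonneg _
    have h2 : (0 : ℝ) ≤ ‖iteratedFDeriv ℝ 2 φ y‖ := norm_nonneg _
    linarith
  have hder : ∀ y : E2, ‖y‖ ≤ 2 → ‖fderiv ℝ φ y‖ ≤ 1 / 16 := by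
    intro y hy
    have h := hbound y hy
    have h1 := abs_nonneg (φ y)
    have h2 : (0 : ℝ) ≤ ‖iteratedFDeriv ℝ 2 φ y‖ := norm_nonneg _
    linarith
  have hlip : ∀ w z : E2, ‖w‖ ≤ 2 → ‖z‖ ≤ 2 → |φ w - φ z| ≤ (1 / 16) * ‖w - z‖ := by
    intro w z hw hz
    have h := (convex_closedBall (0 : E2) 2).norm_image_sub_le_of_norm_fderiv_le
      (f := φ) (C := 1 / 16)
      (fun x _ => (hφ.differentiable (by norm_num)).differentiableAt)
      (fun x hx => hder x (by simpa [mem_closedBall_zero_iff] using hx))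
      (mem_closedBall_zero_iff.mpr hz) (mem_closedBall_zero_iff.mpr hw)
    simpa [Real.norm_eq_abs] using h
  have hballO : ball starCenter (1 / 16) ⊆ Odom φ r := by
    intro a ha
    obtain ⟨hpa, ha2l, ha2u⟩ := ball_facts ha
    have hpsq := norm_proj2_sq a
    have hn : (0 : ℝ) ≤ ‖proj2 a‖ := norm_nonneg _
    have h0 : |a 0| < 1 := by
      rw [abs_lt]; constructor <;> nlinarith [sq_nonneg (a 1)]
    have h1 : |a 1| < 1 := by
      rw [abs_lt]; constructor <;> nlinarith [sq_nonneg (a 0)]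
    have hφa := abs_le.mp (hφle (proj2 a) (by linarith))
    refine ⟨⟨⟨h0, h1, by rw [abs_lt]; constructor <;> linarith⟩, ?_⟩, ?_⟩
    · rintro ⟨-, h2⟩
      linarith
    · show a 2 > φ (proj2 a)
      linarith
  refine ⟨hballO, ?_⟩
  rintro a ha b hb x hx
  obtain ⟨hpa, ha2l, ha2u⟩ := ball_facts ha
  obtain ⟨⟨⟨hb0, hb1, hb2⟩, hbnc⟩, hbg⟩ := hb
  obtain ⟨u, v, hu, hv, huv, rfl⟩ := hx
  have hbnc' : r - b 2 ≤ ‖proj2 b‖ := not_lt.mp (mt (mem_coneE_iff r b).mpr hbnc)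
  have hbg' : b 2 > φ (proj2 b) := hbg
  have hpsqa := norm_proj2_sq a
  have hna : (0 : ℝ) ≤ ‖proj2 a‖ := norm_nonneg _
  have ha0 : |a 0| < 1 := by
    rw [abs_lt]; constructor <;> nlinarith [sq_nonneg (a 1)]
  have ha1 : |a 1| < 1 := by
    rw [abs_lt]; constructor <;> nlinarith [sq_nonneg (a 0)]
  have ha2abs : |a 2| < 1 := by rw [abs_lt]; constructor <;> linarith
  have hpsqb := norm_proj2_sq b
  have hnb : (0 : ℝ) ≤ ‖proj2 b‖ := norm_nonneg _
  have hpb32 : ‖proj2 b‖ ≤ 3 / 2 := by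
    nlinarith [sq_abs (b 0), sq_abs (b 1), abs_nonneg (b 0), abs_nonneg (b 1)]
  refine ⟨⟨⟨?_, ?_, ?_⟩, ?_⟩, ?_⟩
  · rw [comb_apply]; exact comb_abs_lt hu hv huv ha0 hb0
  · rw [comb_apply]; exact comb_abs_lt hu hv huv ha1 hb1
  · rw [comb_apply]; exact comb_abs_lt hu hv huv ha2abs hb2
  · intro hxc
    rw [mem_coneE_iff, proj2_comb, comb_apply] at hxc
    have htri0 := norm_sub_le (u • proj2 a + v • proj2 b) (u • proj2 a)
    have e : u • proj2 a + v • proj2 b - u • proj2 a = v • proj2 b := by abel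
    rw [e, norm_smul, norm_smul, Real.norm_eq_abs, Real.norm_eq_abs,
      abs_of_nonneg hu, abs_of_nonneg hv] at htri0
    have h2' : v * (r - b 2) ≤ v * ‖proj2 b‖ := mul_le_mul_of_nonneg_left hbnc' hv
    have h3' : 0 ≤ u * (a 2 - ‖proj2 a‖ - r) :=
      mul_nonneg hu (by linarith)
    have hr' : u * r + v * r = r := by rw [← add_mul, huv, one_mul]
    nlinarith [hxc, htri0, h2', h3', hr']
  · show (u • a + v • b) 2 > φ (proj2 (u • a + v • b))
    rw [comb_apply, proj2_comb]
    have hφpb := abs_le.mp (hφle (proj2 b) (by linarith))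
    rcases hu.lt_or_eq with hupos | hueq
    · have hx2 : ‖u • proj2 a + v • proj2 b‖ ≤ 2 := by
        have h := norm_add_le (u • proj2 a) (v • proj2 b)
        rw [norm_smul, norm_smul, Real.norm_eq_abs, Real.norm_eq_abs,
          abs_of_nonneg hu, abs_of_nonneg hv] at h
        nlinarith [mul_le_mul_of_nonneg_left hpa.le hu, mul_le_mul_of_nonneg_left hpb32 hv]
      have e2 : u • proj2 a + v • proj2 b - proj2 b = u • (proj2 a - proj2 b) := by
        have hv1 : v = 1 - u := by linarith
        rw [hv1, smul_sub, sub_smul, one_smul]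
        abel
      have hdist : ‖u • proj2 a + v • proj2 b - proj2 b‖ ≤ 2 * u := by
        rw [e2, norm_smul, Real.norm_eq_abs, abs_of_nonneg hu]
        have h5 := norm_sub_le (proj2 a) (proj2 b)
        nlinarith [mul_le_mul_of_nonneg_left
          (h5.trans (by linarith : ‖proj2 a‖ + ‖proj2 b‖ ≤ 2)) hu]
      have hlipx := abs_le.mp (hlip (u • proj2 a + v • proj2 b) (proj2 b) hx2 (by linarith))
      have hc' : u * φ (proj2 b) + v * φ (proj2 b) = φ (proj2 b) := by
        rw [← add_mul, huv, one_mul]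
      have p1 : 0 < u * (a 2 - φ (proj2 b) - 1 / 8) :=
        mul_pos hupos (by linarith)
      have p2 : 0 ≤ v * (b 2 - φ (proj2 b)) :=
        mul_nonneg hv (by linarith)
      nlinarith [hlipx.2, hdist, p1, p2, hc']
    · have hv1 : v = 1 := by linarith
      rw [← hueq, hv1]
      simpa using hbg'
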